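/- For every unique search problem W ⊆ {0,1,*}^n, the decision tree complexity satisfies D(W) ≤ s(W)^2. -/

import Mathlib

/-- A deterministic adaptive decision tree over inputs `x : Fin n → Bool`
with outputs in `β`. -/
inductive DTree (n : ℕ) (β : Type) : Type where
  | leaf : β → DTree n β
  | node : Fin n → DTree n β → DTree n β → DTree n β

namespace DTree

/-- Evaluate a decision tree on an input. -/
def eval {n : ℕ} {β : Type} : DTree n β → (Fin n → Bool) → β
  | .leaf b, _ => b
  | .node i t0 t1, x => if x i then eval t1 x else eval t0 x

/-- Depth of a decision tree: the maximum number of queries on a root-to-leaf path. -/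
def depth {n : ℕ} {β : Type} : DTree n β → ℕ
  | .leaf _ => 0
  | .node _ t0 t1 => 1 + max (depth t0) (depth t1)

end DTree

/-- A partial assignment (witness/clause) `w ∈ {0,1,*}^n` agrees with `x ∈ {0,1}^n`
if every 0/1 entry of `w` matches `x`. -/
def Agrees {n : ℕ} (w : Fin n → Option Bool) (x : Fin n → Bool) : Prop :=
  ∀ (i : Fin n) (b : Bool), w i = some b → x i = b

/-- The number of 0/1 (non-`*`) entries of a witness. -/
def wSize {n : ℕ} (w : Fin n → Option Bool) : ℕ :=
  (Finset.univ.filter (fun i : Fin n => (w i).isSome)).card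

/-- A decision tree `T` (outputting `some w'` or `none` for 'no match') solves the
search problem `W`: on inputs agreeing with some witness it outputs a witness of `W`
agreeing with the input, and otherwise it outputs `none`. -/
def Solves {n : ℕ} (T : DTree n (Option (Fin n → Option Bool)))
    (W : Set (Fin n → Option Bool)) : Prop :=
  ∀ x : Fin n → Bool,
    ((∃ w ∈ W, Agrees w x) → ∃ w' ∈ W, T.eval x = some w' ∧ Agrees w' x) ∧
    ((¬ ∃ w ∈ W, Agrees w x) → T.eval x = none)

/-- `s(W)`: the maximum number of 0/1 entries in any witness of `W`. -/
noncomputable def sW {n : ℕ} (W : Set (Fin n → Option Bool)) : ℕ :=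
  sSup (wSize '' W)

/-- `D(W)`: the minimum depth of a decision tree solving the search problem `W`. -/
noncomputable def DW {n : ℕ} (W : Set (Fin n → Option Bool)) : ℕ :=
  sInf {d | ∃ T : DTree n (Option (Fin n → Option Bool)), T.depth ≤ d ∧ Solves T W}

/-- `W` is a total search problem: every input agrees with some witness. -/
def TotalSP {n : ℕ} (W : Set (Fin n → Option Bool)) : Prop :=
  ∀ x : Fin n → Bool, ∃ w ∈ W, Agrees w x

/-- `W` is a unique search problem: every input agrees with at most one witness. -/
def UniqueSP {n : ℕ} (W : Set (Fin n → Option Bool)) : Prop :=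
  ∀ x : Fin n → Bool, ∀ w ∈ W, ∀ w' ∈ W, Agrees w x → Agrees w' x → w = w'

section Aux

open Classical

variable {n : ℕ} {β : Type}

/-- `w` does not conflict with the partial record `ρ`. -/
def Consistent (ρ w : Fin n → Option Bool) : Prop :=
  ∀ i b c, ρ i = some b → w i = some c → b = c

/-- every fixed coordinate of `w` is recorded by `ρ` (with the same value). -/
def FullFixed (ρ w : Fin n → Option Bool) : Prop :=
  ∀ i b, w i = some b → ρ i = some b

noncomputable def fixedCount (ρ w : Fin n → Option Bool) : ℕ :=
  (Finset.univ.filter (fun i => (w i).isSome ∧ (ρ i).isSome)).card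

def record (x : Fin n → Bool) (l : List (Fin n)) (ρ : Fin n → Option Bool) :
    Fin n → Option Bool :=
  fun j => if j ∈ l then some (x j) else ρ j

/-- Query all coordinates in `l`, recording answers, then continue. -/
def queryAll (l : List (Fin n)) (ρ : Fin n → Option Bool)
    (k : (Fin n → Option Bool) → DTree n β) : DTree n β :=
  match l with
  | [] => k ρ
  | i :: l => .node i (queryAll l (fun j => if j = i then some false else ρ j) k)
                      (queryAll l (fun j => if j = i then some true else ρ j) k)

lemma record_cons (x : Fin n → Bool) (i : Fin n) (l : List (Fin n)) (ρ : Fin n → Option Bool) :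
    record x (i :: l) ρ = record x l (fun j => if j = i then some (x i) else ρ j) := by
  funext j
  by_cases hl : j ∈ l
  · simp [record, hl, List.mem_cons]
  · by_cases hi : j = i
    · subst hi; simp [record, hl]
    · simp [record, hl, hi, List.mem_cons]

lemma queryAll_eval (l : List (Fin n)) (ρ : Fin n → Option Bool)
    (k : (Fin n → Option Bool) → DTree n β) (x : Fin n → Bool) :
    (queryAll l ρ k).eval x = (k (record x l ρ)).eval x := by
  induction l generalizing ρ with
  | nil =>
    have : record x [] ρ = ρ := by funext j; simp [record]
    rw [queryAll, this]
  | cons i l ih =>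
    rw [queryAll, record_cons]
    cases h : x i with
    | false => simp [DTree.eval, h, ih]
    | true => simp [DTree.eval, h, ih]

lemma queryAll_depth (l : List (Fin n)) (ρ : Fin n → Option Bool)
    (k : (Fin n → Option Bool) → DTree n β) (d : ℕ)
    (hk : ∀ ρ', (k ρ').depth ≤ d) :
    (queryAll l ρ k).depth ≤ l.length + d := by
  induction l generalizing ρ with
  | nil => simpa [queryAll] using hk ρ
  | cons i l ih =>
    rw [queryAll]
    simp only [DTree.depth, List.length_cons]
    have h0 := ih (fun j => if j = i then some false else ρ j)
    have h1 := ih (fun j => if j = i then some true else ρ j)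
    omega

noncomputable def unfixedList (w ρ : Fin n → Option Bool) : List (Fin n) :=
  (Finset.univ.filter (fun i => (w i).isSome ∧ ρ i = none)).toList

lemma mem_unfixedList {w ρ : Fin n → Option Bool} {i : Fin n} :
    i ∈ unfixedList w ρ ↔ ((w i).isSome ∧ ρ i = none) := by
  simp [unfixedList, Finset.mem_toList, Finset.mem_filter]

lemma unfixedList_length_le (w ρ : Fin n → Option Bool) :
    (unfixedList w ρ).length ≤ wSize w := by
  rw [unfixedList, Finset.length_toList, wSize]
  exact Finset.card_le_card (fun i hi => by
    simp only [Finset.mem_filter] at *; exact ⟨hi.1, hi.2.1⟩)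

/-- The recursive solver: with `fuel` rounds remaining and record `ρ`. -/
noncomputable def solve (W : Set (Fin n → Option Bool)) :
    ℕ → (Fin n → Option Bool) → DTree n (Option (Fin n → Option Bool))
  | 0, ρ =>
    if h : ∃ w ∈ W, FullFixed ρ w then .leaf (some h.choose) else .leaf none
  | fuel + 1, ρ =>
    if h : ∃ w ∈ W, FullFixed ρ w then .leaf (some h.choose)
    else if h2 : ∃ w ∈ W, Consistent ρ w then
      queryAll (unfixedList h2.choose ρ) ρ (solve W fuel)
    else .leaf none

lemma solve_depth (W : Set (Fin n → Option Bool)) (s : ℕ)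
    (hs : ∀ w ∈ W, wSize w ≤ s) :
    ∀ fuel ρ, (solve W fuel ρ).depth ≤ fuel * s := by
  intro fuel
  induction fuel with
  | zero =>
    intro ρ; rw [solve]
    split <;> simp [DTree.depth]
  | succ fuel ih =>
    intro ρ; rw [solve]
    split
    · simp [DTree.depth]
    · split
      · next h2 =>
        have hl : (unfixedList h2.choose ρ).length ≤ s :=
          le_trans (unfixedList_length_le _ _) (hs _ h2.choose_spec.1)
        have := queryAll_depth (unfixedList h2.choose ρ) ρ (solve W fuel) (fuel * s)
          (fun ρ' => ih ρ')
        calc (queryAll (unfixedList h2.choose ρ) ρ (solve W fuel)).depth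
            ≤ (unfixedList h2.choose ρ).length + fuel * s := this
          _ ≤ s + fuel * s := by omega
          _ = (fuel + 1) * s := by ring
      · simp [DTree.depth]

lemma exists_conflict {W : Set (Fin n → Option Bool)} (hU : UniqueSP W)
    {w w' : Fin n → Option Bool} (hw : w ∈ W) (hw' : w' ∈ W) (hne : w ≠ w') :
    ∃ i b b', w i = some b ∧ w' i = some b' ∧ b ≠ b' := by
  by_contra hcon
  push_neg at hcon
  set x : Fin n → Bool := fun i => (w i).getD ((w' i).getD false) with hx
  have hag : Agrees w x := by
    intro i b hib; simp [hx, hib]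
  have hag' : Agrees w' x := by
    intro i b hib
    cases hwi : w i with
    | none => simp [hx, hwi, hib]
    | some c =>
      have := hcon i c b hwi hib
      simp [hx, hwi, this]
  exact hne (hU x w hw w' hw' hag hag')

lemma fullFixed_of_count {ρ w : Fin n → Option Bool} (hc : Consistent ρ w)
    (hcard : wSize w ≤ fixedCount ρ w) : FullFixed ρ w := by
  have hsub : (Finset.univ.filter (fun i => (w i).isSome ∧ (ρ i).isSome)) ⊆
      (Finset.univ.filter (fun i : Fin n => (w i).isSome)) := by
    intro i hi; simp only [Finset.mem_filter] at *; exact ⟨hi.1, hi.2.1⟩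
  have heq := Finset.eq_of_subset_of_card_le hsub hcard
  intro i b hib
  have hi : i ∈ Finset.univ.filter (fun i : Fin n => (w i).isSome) := by
    simp [Finset.mem_filter, hib]
  rw [← heq] at hi
  simp only [Finset.mem_filter] at hi
  obtain ⟨c, hc'⟩ := Option.isSome_iff_exists.mp hi.2.2
  rw [hc', hc i c b hc' hib]

lemma agrees_of_fullFixed {ρ w : Fin n → Option Bool} {x : Fin n → Bool}
    (hg : ∀ i b, ρ i = some b → x i = b) (hf : FullFixed ρ w) : Agrees w x :=
  fun i b hib => hg i b (hf i b hib)

lemma consistent_of_agrees {ρ w : Fin n → Option Bool} {x : Fin n → Bool}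
    (hg : ∀ i b, ρ i = some b → x i = b) (ha : Agrees w x) : Consistent ρ w :=
  fun i b c hb hcc => (hg i b hb).symm.trans (ha i c hcc)

lemma solve_correct (W : Set (Fin n → Option Bool)) (hU : UniqueSP W)
    (s : ℕ) (hs : ∀ w ∈ W, wSize w ≤ s) :
    ∀ fuel (ρ : Fin n → Option Bool) (x : Fin n → Bool),
      (∀ i b, ρ i = some b → x i = b) →
      (∀ w ∈ W, Consistent ρ w → FullFixed ρ w ∨ s - fuel ≤ fixedCount ρ w) →
      ((∃ w ∈ W, Agrees w x) →
        ∃ w' ∈ W, (solve W fuel ρ).eval x = some w' ∧ Agrees w' x) ∧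
      ((¬ ∃ w ∈ W, Agrees w x) → (solve W fuel ρ).eval x = none) := by
  intro fuel
  induction fuel with
  | zero =>
    intro ρ x hg hinv
    rw [solve]
    by_cases h : ∃ w ∈ W, FullFixed ρ w
    · rw [dif_pos h]
      have hspec := h.choose_spec
      have hag : Agrees h.choose x := agrees_of_fullFixed hg hspec.2
      constructor
      · intro _; exact ⟨h.choose, hspec.1, rfl, hag⟩
      · intro hneg; exact (hneg ⟨h.choose, hspec.1, hag⟩).elim
    · rw [dif_neg h]
      constructor
      · rintro ⟨w, hwW, hag⟩
        have hcons := consistent_of_agrees hg hag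
        rcases hinv w hwW hcons with hff | hk
        · exact (h ⟨w, hwW, hff⟩).elim
        · have : FullFixed ρ w := fullFixed_of_count hcons
            (le_trans (hs w hwW) (by simpa using hk))
          exact (h ⟨w, hwW, this⟩).elim
      · intro _; rfl
  | succ fuel ih =>
    intro ρ x hg hinv
    rw [solve]
    by_cases h : ∃ w ∈ W, FullFixed ρ w
    · rw [dif_pos h]
      have hspec := h.choose_spec
      have hag : Agrees h.choose x := agrees_of_fullFixed hg hspec.2
      constructor
      · intro _; exact ⟨h.choose, hspec.1, rfl, hag⟩
      · intro hneg; exact (hneg ⟨h.choose, hspec.1, hag⟩).elim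
    · rw [dif_neg h]
      by_cases h2 : ∃ w ∈ W, Consistent ρ w
      · rw [dif_pos h2]
        set w0 := h2.choose with hw0
        have hw0spec := h2.choose_spec
        set l := unfixedList w0 ρ with hl
        set ρ' := record x l ρ with hρ'
        -- ρ' extends ρ
        have hext : ∀ i b, ρ i = some b → ρ' i = some b := by
          intro i b hib
          have : i ∉ l := by
            intro hi; rw [hl, mem_unfixedList] at hi
            rw [hi.2] at hib; exact Option.some_ne_none b hib.symm
          simp [hρ', record, this, hib]
        have hg' : ∀ i b, ρ' i = some b → x i = b := by
          intro i b hib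
          by_cases hi : i ∈ l
          · simp only [hρ', record, if_pos hi] at hib
            exact (Option.some_injective _ hib)
          · exact hg i b (by simpa [hρ', record, hi] using hib)
        have hinv' : ∀ w ∈ W, Consistent ρ' w →
            FullFixed ρ' w ∨ s - fuel ≤ fixedCount ρ' w := by
          intro w' hw'W hcons'
          have hcons : Consistent ρ w' := by
            intro i b c hib hic
            exact hcons' i b c (hext i b hib) hic
          rcases hinv w' hw'W hcons with hff | hk
          · left; intro i b hib
            exact hext i b (hff i b hib)
          · by_cases hew : w' = w0
            · left
              subst hew
              intro i b hib
              by_cases hni : ρ i = none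
              · have hil : i ∈ l := by
                  rw [hl, mem_unfixedList]; exact ⟨Option.isSome_iff_exists.mpr ⟨_, hib⟩, hni⟩
                have : ρ' i = some (x i) := by simp [hρ', record, hil]
                rw [this, hcons' i (x i) b this hib]
              · obtain ⟨c, hc⟩ := Option.ne_none_iff_exists'.mp hni
                rw [hext i c hc, hcons i c b hc hib]
            · -- conflict coordinate
              obtain ⟨i, b, b', hib, hib', hbb⟩ :=
                exists_conflict hU hw'W hw0spec.1 hew
              -- here hib : w' i = some b, hib' : w0 i = some b'
              have hni : ρ i = none := by
                by_contra hni
                obtain ⟨c, hc⟩ := Option.ne_none_iff_exists'.mp hni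
                have h1 := hcons i c b hc hib
                have h2 := hw0spec.2 i c b' hc hib'
                exact hbb (h1.symm.trans h2)
              have hil : i ∈ l := by
                rw [hl, mem_unfixedList]; exact ⟨Option.isSome_iff_exists.mpr ⟨_, hib'⟩, hni⟩
              have hρ'i : ρ' i = some (x i) := by simp [hρ', record, hil]
              right
              have hss : (Finset.univ.filter (fun j => (w' j).isSome ∧ (ρ j).isSome)) ⊂
                  (Finset.univ.filter (fun j => (w' j).isSome ∧ (ρ' j).isSome)) := by
                constructor
                · intro j hj
                  simp only [Finset.mem_filter] at *
                  obtain ⟨c, hc⟩ := Option.isSome_iff_exists.mp hj.2.2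
                  exact ⟨hj.1, hj.2.1, by rw [hext j c hc]; rfl⟩
                · intro hsub
                  have hi : i ∈ Finset.univ.filter
                      (fun j => (w' j).isSome ∧ (ρ' j).isSome) := by
                    simp [Finset.mem_filter, hib, hρ'i]
                  have := hsub hi
                  simp [Finset.mem_filter, hni] at this
              have hlt : fixedCount ρ w' < fixedCount ρ' w' :=
                Finset.card_lt_card hss
              omega
        have hIH := ih ρ' x hg' hinv'
        rw [queryAll_eval]
        exact hIH
      · rw [dif_neg h2]
        constructor
        · rintro ⟨w, hwW, hag⟩
          exact (h2 ⟨w, hwW, consistent_of_agrees hg hag⟩).elim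
        · intro _; rfl

end Aux
/-- For every unique search problem `W ⊆ {0,1,*}^n`,
`D(W) ≤ s(W)^2`. -/
theorem DW_le_sW_sq {n : ℕ} (W : Set (Fin n → Option Bool)) (hU : UniqueSP W) :
    DW W ≤ (sW W) ^ 2 := by
  classical
  set s := sW W with hsdef
  have hbdd : BddAbove (wSize '' W) := by
    refine ⟨n, ?_⟩
    rintro m ⟨w, hw, rfl⟩
    calc wSize w ≤ (Finset.univ : Finset (Fin n)).card := Finset.card_filter_le _ _
      _ = n := by simp
  have hs : ∀ w ∈ W, wSize w ≤ s := fun w hw => le_csSup hbdd ⟨w, hw, rfl⟩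
  set T := solve W s (fun _ => none) with hT
  have hd : T.depth ≤ s * s := solve_depth W s hs s _
  have hsolves : Solves T W := by
    intro x
    exact solve_correct W hU s hs s (fun _ => none) x
      (fun i b hib => (Option.some_ne_none b hib.symm).elim)
      (fun w hw _ => Or.inr (by simp))
  exact Nat.sInf_le ⟨T, by simpa [pow_two] using hd, hsolves⟩
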